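/- Equality case of the discrete Cramér–Rao-type bound: for a pmf p on ℕ with finite second moment and p(i) → 0, equality (σ² + 1/2 − ((μ+1)²/2)·p(0)) · I_d(p) = (1 − (μ+1)·p(0))² holds if and only if p(i) = δ_{i0} (i.e., p(0) = 1 and p(i) = 0 for i ≥ 1). -/

import Mathlib

open Filter Real

private lemma tsum_cauchy_schwarz {u v : ℕ → ℝ} (hu : Summable fun i => u i ^ 2)
    (hv : Summable fun i => v i ^ 2) (huv : Summable fun i => u i * v i) :
    (∑' i, u i * v i) ^ 2 ≤ (∑' i, u i ^ 2) * ∑' i, v i ^ 2 := by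
  have h1 : Tendsto (fun n => (∑ i ∈ Finset.range n, u i * v i) ^ 2) atTop
      (nhds ((∑' i, u i * v i) ^ 2)) := huv.hasSum.tendsto_sum_nat.pow 2
  refine le_of_tendsto' h1 fun n => ?_
  calc (∑ i ∈ Finset.range n, u i * v i) ^ 2
      ≤ (∑ i ∈ Finset.range n, u i ^ 2) * ∑ i ∈ Finset.range n, v i ^ 2 :=
        Finset.sum_mul_sq_le_sq_mul_sq _ _ _
    _ ≤ _ := mul_le_mul (Summable.sum_le_tsum _ (fun i _ => sq_nonneg _) hu)
        (Summable.sum_le_tsum _ (fun i _ => sq_nonneg _) hv)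
        (Finset.sum_nonneg fun i _ => sq_nonneg _) (tsum_nonneg fun i => sq_nonneg _)

private lemma const_contra (p : ℕ → ℝ) (hsum : ∑' i, p i = 1)
    (htend : Tendsto p atTop (nhds 0)) (hc : ∀ i, p (i + 1) = p i) : False := by
  have hall : ∀ i, p i = p 0 := by
    intro i; induction i with
    | zero => rfl
    | succ n ih => rw [hc, ih]
  have h1 : Tendsto p atTop (nhds (p 0)) := by
    have : p = fun _ => p 0 := funext hall
    rw [this]; exact tendsto_const_nhds
  have h0 : p 0 = 0 := tendsto_nhds_unique h1 htend
  have : ∑' i, p i = 0 := by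
    have : p = fun _ => (0 : ℝ) := funext fun i => by rw [hall i, h0]
    rw [this, tsum_zero]
  linarith

set_option maxHeartbeats 1000000 in
theorem discrete_cramer_rao_equality (p : ℕ → ℝ) (hp : ∀ i, 0 ≤ p i)
    (hsum : ∑' i, p i = 1) (hmom : Summable (fun i : ℕ => (i : ℝ) ^ 2 * p i))
    (htend : Tendsto p atTop (nhds 0))
    (μ σ2 : ℝ) (hμ : μ = ∑' i : ℕ, (i : ℝ) * p i)
    (hσ : σ2 = (∑' i : ℕ, (i : ℝ) ^ 2 * p i) - μ ^ 2) :
    (σ2 + 1 / 2 - ((μ + 1) ^ 2 / 2) * p 0) *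
        (4 * ∑' i : ℕ, (Real.sqrt (p (i + 1)) - Real.sqrt (p i)) ^ 2) =
      (1 - (μ + 1) * p 0) ^ 2 ↔ ∀ i, p i = if i = 0 then 1 else 0 := by
  -- basic summabilities
  have hps : Summable p := by
    by_contra h
    rw [tsum_eq_zero_of_not_summable h] at hsum; norm_num at hsum
  have hps1 : Summable fun i => p (i + 1) := (summable_nat_add_iff 1).2 hps
  have hmom1 : Summable fun i : ℕ => (i : ℝ) * p i := by
    refine Summable.of_nonneg_of_le (fun i => mul_nonneg (Nat.cast_nonneg i) (hp i))
      (fun i => ?_) (hmom.add hps)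
    have h1 : (i : ℝ) ≤ (i : ℝ) ^ 2 + 1 := by nlinarith [sq_nonneg ((i : ℝ) - 1)]
    nlinarith [hp i]
  have hgen : ∀ t : ℝ, Summable fun i : ℕ => ((i : ℝ) - t) ^ 2 * p i := by
    intro t
    refine Summable.of_nonneg_of_le (fun i => mul_nonneg (sq_nonneg _) (hp i)) (fun i => ?_)
      ((hmom.mul_left 2).add (hps.mul_left (2 * t ^ 2)))
    have h1 : ((i : ℝ) - t) ^ 2 ≤ 2 * (i : ℝ) ^ 2 + 2 * t ^ 2 := by nlinarith [sq_nonneg ((i : ℝ) + t)]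
    calc ((i : ℝ) - t) ^ 2 * p i ≤ (2 * (i : ℝ) ^ 2 + 2 * t ^ 2) * p i :=
          mul_le_mul_of_nonneg_right h1 (hp i)
      _ = 2 * ((i : ℝ) ^ 2 * p i) + 2 * t ^ 2 * p i := by ring
  have hc2p : Summable fun i : ℕ => ((i : ℝ) - μ) ^ 2 * p i := hgen μ
  have hc2p1 : Summable fun i : ℕ => ((i : ℝ) - μ) ^ 2 * p (i + 1) := by
    have h := (summable_nat_add_iff (f := fun i : ℕ => ((i : ℝ) - (μ + 1)) ^ 2 * p i) 1).2
      (hgen (μ + 1))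
    exact h.congr fun i => by push_cast; ring
  have hip1 : Summable fun i : ℕ => (i : ℝ) * p (i + 1) := by
    have h := (summable_nat_add_iff (f := fun i : ℕ => (i : ℝ) * p i) 1).2 hmom1
    exact (h.sub hps1).congr fun i => by push_cast; ring
  have hip1' : Summable fun i : ℕ => ((i : ℝ) + 1) * p (i + 1) :=
    (hip1.add hps1).congr fun i => by ring
  have hi2p1 : Summable fun i : ℕ => (i : ℝ) ^ 2 * p (i + 1) := by
    have h := (summable_nat_add_iff (f := fun i : ℕ => (i : ℝ) ^ 2 * p i) 1).2 hmom
    exact ((h.sub (hip1.mul_left 2)).sub hps1).congr fun i => by push_cast; ring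
  have hi2p1' : Summable fun i : ℕ => ((i : ℝ) + 1) ^ 2 * p (i + 1) :=
    ((hi2p1.add (hip1.mul_left 2)).add hps1).congr fun i => by ring
  have hcp : Summable fun i : ℕ => ((i : ℝ) - μ) * p i :=
    (hmom1.sub (hps.mul_left μ)).congr fun i => by ring
  have hcp1 : Summable fun i : ℕ => ((i : ℝ) - μ) * p (i + 1) :=
    (hip1.sub (hps1.mul_left μ)).congr fun i => by ring
  have hcd : Summable fun i : ℕ => ((i : ℝ) - μ) * (p (i + 1) - p i) :=
    (hcp1.sub hcp).congr fun i => by ring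
  -- tsum values
  have t1 : ∑' i : ℕ, p (i + 1) = 1 - p 0 := by
    have h := Summable.tsum_eq_zero_add hps; rw [hsum] at h; linarith
  have t2 : ∑' i : ℕ, ((i : ℝ) + 1) * p (i + 1) = μ := by
    have h := Summable.tsum_eq_zero_add hmom1
    rw [← hμ] at h
    have h2 : ∑' i : ℕ, ((↑(i + 1) : ℝ)) * p (i + 1) = ∑' i : ℕ, ((i : ℝ) + 1) * p (i + 1) :=
      tsum_congr fun i => by push_cast; ring
    rw [h2] at h; simpa using h.symm
  have t3 : ∑' i : ℕ, (i : ℝ) * p (i + 1) = μ - (1 - p 0) := by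
    have h := Summable.tsum_sub hip1' hps1
    have hc : ∑' i : ℕ, (((i : ℝ) + 1) * p (i + 1) - p (i + 1)) = ∑' i : ℕ, (i : ℝ) * p (i + 1) :=
      tsum_congr fun i => by ring
    rw [hc] at h; rw [h, t2, t1]
  have t2' : ∑' i : ℕ, ((i : ℝ) + 1) ^ 2 * p (i + 1) = σ2 + μ ^ 2 := by
    have h := Summable.tsum_eq_zero_add hmom
    have h2 : ∑' i : ℕ, ((↑(i + 1) : ℝ)) ^ 2 * p (i + 1) = ∑' i : ℕ, ((i : ℝ) + 1) ^ 2 * p (i + 1) :=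
      tsum_congr fun i => by push_cast; ring
    rw [h2] at h
    have h3 : (∑' i : ℕ, (i : ℝ) ^ 2 * p i) = σ2 + μ ^ 2 := by linarith [hσ]
    rw [h3] at h; simpa using h.symm
  have t4 : ∑' i : ℕ, (i : ℝ) ^ 2 * p (i + 1) = σ2 + μ ^ 2 - 2 * μ + (1 - p 0) := by
    have e1 := Summable.tsum_add (hi2p1'.sub (hip1'.mul_left 2)) hps1
    have e2 := Summable.tsum_sub hi2p1' (hip1'.mul_left 2)
    have hc : ∑' i : ℕ, ((((i : ℝ) + 1) ^ 2 * p (i + 1) - 2 * (((i : ℝ) + 1) * p (i + 1))) + p (i + 1))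
        = ∑' i : ℕ, (i : ℝ) ^ 2 * p (i + 1) := tsum_congr fun i => by ring
    rw [hc] at e1
    rw [e1, e2, tsum_mul_left, t2', t2, t1]
  have t5 : ∑' i : ℕ, ((i : ℝ) - μ) ^ 2 * p i = σ2 := by
    have e1 := Summable.tsum_sub (hmom.sub (hmom1.mul_left (2 * μ))) (hps.mul_left (-(μ ^ 2)))
    have e2 := Summable.tsum_sub hmom (hmom1.mul_left (2 * μ))
    have hc : ∑' i : ℕ, (((i : ℝ) ^ 2 * p i - 2 * μ * ((i : ℝ) * p i)) - (-(μ ^ 2)) * p i)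
        = ∑' i : ℕ, ((i : ℝ) - μ) ^ 2 * p i := tsum_congr fun i => by ring
    rw [hc] at e1
    rw [e1, e2, tsum_mul_left, tsum_mul_left, ← hμ, hsum,
      show (∑' i : ℕ, (i : ℝ) ^ 2 * p i) = σ2 + μ ^ 2 from by linarith]; ring
  have t6 : ∑' i : ℕ, ((i : ℝ) - μ) ^ 2 * p (i + 1) = σ2 + 1 - (μ + 1) ^ 2 * p 0 := by
    have e1 := Summable.tsum_sub (hi2p1.sub (hip1.mul_left (2 * μ))) (hps1.mul_left (-(μ ^ 2)))
    have e2 := Summable.tsum_sub hi2p1 (hip1.mul_left (2 * μ))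
    have hc : ∑' i : ℕ, (((i : ℝ) ^ 2 * p (i + 1) - 2 * μ * ((i : ℝ) * p (i + 1))) - (-(μ ^ 2)) * p (i + 1))
        = ∑' i : ℕ, ((i : ℝ) - μ) ^ 2 * p (i + 1) := tsum_congr fun i => by ring
    rw [hc] at e1
    rw [e1, e2, tsum_mul_left, tsum_mul_left, t4, t3, t1]; ring
  have t7 : ∑' i : ℕ, ((i : ℝ) - μ) * (p (i + 1) - p i) = (μ + 1) * p 0 - 1 := by
    have e1 := Summable.tsum_sub hcp1 hcp
    have hc : ∑' i : ℕ, (((i : ℝ) - μ) * p (i + 1) - ((i : ℝ) - μ) * p i)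
        = ∑' i : ℕ, ((i : ℝ) - μ) * (p (i + 1) - p i) := tsum_congr fun i => by ring
    rw [hc] at e1
    have e3 := Summable.tsum_sub hip1 (hps1.mul_left μ)
    have hc3 : ∑' i : ℕ, ((i : ℝ) * p (i + 1) - μ * p (i + 1))
        = ∑' i : ℕ, ((i : ℝ) - μ) * p (i + 1) := tsum_congr fun i => by ring
    rw [hc3] at e3
    have e4 := Summable.tsum_sub hmom1 (hps.mul_left μ)
    have hc4 : ∑' i : ℕ, ((i : ℝ) * p i - μ * p i)
        = ∑' i : ℕ, ((i : ℝ) - μ) * p i := tsum_congr fun i => by ring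
    rw [hc4] at e4
    rw [e1, e3, e4, tsum_mul_left, tsum_mul_left, t3, t1, ← hμ, hsum]; ring
  -- sqrt identities
  have key_ab : ∀ i : ℕ, (Real.sqrt (p (i + 1)) - Real.sqrt (p i)) * (Real.sqrt (p (i + 1)) + Real.sqrt (p i))
      = p (i + 1) - p i := fun i => by
    have h1 := Real.sq_sqrt (hp (i + 1)); have h2 := Real.sq_sqrt (hp i)
    linear_combination h1 - h2
  have key_sq : ∀ i : ℕ, (Real.sqrt (p (i + 1)) - Real.sqrt (p i)) ^ 2
      + (Real.sqrt (p (i + 1)) + Real.sqrt (p i)) ^ 2 = 2 * (p (i + 1) + p i) := fun i => by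
    have h1 := Real.sq_sqrt (hp (i + 1)); have h2 := Real.sq_sqrt (hp i)
    linear_combination 2 * h1 + 2 * h2
  have hb2 : ∀ i : ℕ, (Real.sqrt (p (i + 1)) + Real.sqrt (p i)) ^ 2 ≤ 2 * (p (i + 1) + p i) := fun i => by
    have := key_sq i
    nlinarith [sq_nonneg (Real.sqrt (p (i + 1)) - Real.sqrt (p i))]
  have hA : Summable fun i => (Real.sqrt (p (i + 1)) - Real.sqrt (p i)) ^ 2 := by
    refine Summable.of_nonneg_of_le (fun i => sq_nonneg _) (fun i => ?_) ((hps1.add hps).mul_left 2)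
    have := key_sq i
    nlinarith [sq_nonneg (Real.sqrt (p (i + 1)) + Real.sqrt (p i))]
  have hub : ∀ i : ℕ, (((i : ℝ) - μ) * (Real.sqrt (p (i + 1)) + Real.sqrt (p i))) ^ 2
      ≤ 2 * (((i : ℝ) - μ) ^ 2 * p (i + 1) + ((i : ℝ) - μ) ^ 2 * p i) := fun i => by
    have h := mul_le_mul_of_nonneg_left (hb2 i) (sq_nonneg ((i : ℝ) - μ))
    calc (((i : ℝ) - μ) * (Real.sqrt (p (i + 1)) + Real.sqrt (p i))) ^ 2
        = ((i : ℝ) - μ) ^ 2 * (Real.sqrt (p (i + 1)) + Real.sqrt (p i)) ^ 2 := by ring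
      _ ≤ ((i : ℝ) - μ) ^ 2 * (2 * (p (i + 1) + p i)) := h
      _ = 2 * (((i : ℝ) - μ) ^ 2 * p (i + 1) + ((i : ℝ) - μ) ^ 2 * p i) := by ring
  have hu2 : Summable fun i : ℕ => (((i : ℝ) - μ) * (Real.sqrt (p (i + 1)) + Real.sqrt (p i))) ^ 2 := by
    refine Summable.of_nonneg_of_le (fun i => sq_nonneg _) hub ?_
    exact (hc2p1.add hc2p).mul_left 2
  have huv : Summable fun i : ℕ => (((i : ℝ) - μ) * (Real.sqrt (p (i + 1)) + Real.sqrt (p i)))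
      * (Real.sqrt (p (i + 1)) - Real.sqrt (p i)) := by
    refine hcd.congr fun i => ?_
    rw [← key_ab i]; ring
  have tT : ∑' i : ℕ, (((i : ℝ) - μ) * (Real.sqrt (p (i + 1)) + Real.sqrt (p i)))
      * (Real.sqrt (p (i + 1)) - Real.sqrt (p i)) = (μ + 1) * p 0 - 1 := by
    rw [← t7]
    exact tsum_congr fun i => by rw [← key_ab i]; ring
  have hU_le : ∑' i : ℕ, (((i : ℝ) - μ) * (Real.sqrt (p (i + 1)) + Real.sqrt (p i))) ^ 2
      ≤ 2 * (2 * σ2 + 1 - (μ + 1) ^ 2 * p 0) := by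
    have h := Summable.tsum_le_tsum hub hu2 ((hc2p1.add hc2p).mul_left 2)
    have h2 : ∑' i : ℕ, 2 * (((i : ℝ) - μ) ^ 2 * p (i + 1) + ((i : ℝ) - μ) ^ 2 * p i)
        = 2 * (2 * σ2 + 1 - (μ + 1) ^ 2 * p 0) := by
      rw [tsum_mul_left, Summable.tsum_add hc2p1 hc2p, t5, t6]; ring
    rw [h2] at h; exact h
  have hCS := tsum_cauchy_schwarz hu2 hA huv
  rw [tT] at hCS
  constructor
  · intro hEq
    set A := ∑' i : ℕ, (Real.sqrt (p (i + 1)) - Real.sqrt (p i)) ^ 2 with hAdef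
    have hA0 : 0 ≤ A := tsum_nonneg fun i => sq_nonneg _
    rcases eq_or_lt_of_le hA0 with hA0' | hApos
    · -- A = 0 : p constant, contradiction
      exfalso
      have hzero : ∀ i, (Real.sqrt (p (i + 1)) - Real.sqrt (p i)) ^ 2 = 0 := by
        intro i
        by_contra h
        have hlt : 0 < (Real.sqrt (p (i + 1)) - Real.sqrt (p i)) ^ 2 :=
          lt_of_le_of_ne (sq_nonneg _) (Ne.symm h)
        have hpos : 0 < A := by rw [hAdef]; exact Summable.tsum_pos hA (fun j => sq_nonneg _) i hlt
        linarith
      refine const_contra p hsum htend fun i => ?_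
      have := sq_eq_zero_iff.1 (hzero i)
      have := sub_eq_zero.1 this
      exact (Real.sqrt_inj (hp (i + 1)) (hp i)).1 this
    · -- A > 0 : equality analysis
      have hTsq : ((μ + 1) * p 0 - 1) ^ 2 = (2 * (2 * σ2 + 1 - (μ + 1) ^ 2 * p 0)) * A := by
        linear_combination -hEq
      have hU_ge : 2 * (2 * σ2 + 1 - (μ + 1) ^ 2 * p 0)
          ≤ ∑' i : ℕ, (((i : ℝ) - μ) * (Real.sqrt (p (i + 1)) + Real.sqrt (p i))) ^ 2 := by
        have h := hCS
        rw [hTsq] at h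
        exact le_of_mul_le_mul_right h hApos
      have hU_eq : ∑' i : ℕ, (((i : ℝ) - μ) * (Real.sqrt (p (i + 1)) + Real.sqrt (p i))) ^ 2
          = ∑' i : ℕ, 2 * (((i : ℝ) - μ) ^ 2 * p (i + 1) + ((i : ℝ) - μ) ^ 2 * p i) := by
        have h2 : ∑' i : ℕ, 2 * (((i : ℝ) - μ) ^ 2 * p (i + 1) + ((i : ℝ) - μ) ^ 2 * p i)
            = 2 * (2 * σ2 + 1 - (μ + 1) ^ 2 * p 0) := by
          rw [tsum_mul_left, Summable.tsum_add hc2p1 hc2p, t5, t6]; ring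
        rw [h2]; linarith [hU_le, hU_ge]
      have hterm : ∀ i : ℕ, (((i : ℝ) - μ) * (Real.sqrt (p (i + 1)) + Real.sqrt (p i))) ^ 2
          = 2 * (((i : ℝ) - μ) ^ 2 * p (i + 1) + ((i : ℝ) - μ) ^ 2 * p i) := by
        intro i
        by_contra h
        have hlt : (((i : ℝ) - μ) * (Real.sqrt (p (i + 1)) + Real.sqrt (p i))) ^ 2
            < 2 * (((i : ℝ) - μ) ^ 2 * p (i + 1) + ((i : ℝ) - μ) ^ 2 * p i) :=
          lt_of_le_of_ne (hub i) h
        have := Summable.tsum_lt_tsum_of_nonneg (fun j => sq_nonneg _) hub hlt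
          ((hc2p1.add hc2p).mul_left 2)
        rw [hU_eq] at this
        exact lt_irrefl _ this
      have hkey : ∀ i : ℕ, (i : ℝ) ≠ μ → p (i + 1) = p i := by
        intro i hi
        have h := hterm i
        have hca : (((i : ℝ) - μ) * (Real.sqrt (p (i + 1)) - Real.sqrt (p i))) ^ 2 = 0 := by
          linear_combination ((i : ℝ) - μ) ^ 2 * key_sq i - h
        have := sq_eq_zero_iff.1 hca
        rcases mul_eq_zero.1 this with h1 | h2
        · exact absurd (by linarith [sub_eq_zero.1 h1] : (i : ℝ) = μ) hi
        · exact (Real.sqrt_inj (hp (i + 1)) (hp i)).1 (sub_eq_zero.1 h2)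
      by_cases hex : ∃ n : ℕ, (n : ℝ) = μ
      · obtain ⟨n, hn⟩ := hex
        have hne : ∀ i : ℕ, i ≠ n → p (i + 1) = p i := by
          intro i hi
          refine hkey i ?_
          rw [← hn]
          exact fun hh => hi (Nat.cast_injective hh)
        have htail : ∀ k : ℕ, p (n + 1 + k) = p (n + 1) := by
          intro k; induction k with
          | zero => rfl
          | succ m ih =>
            rw [show n + 1 + (m + 1) = (n + 1 + m) + 1 from rfl, hne (n + 1 + m) (by omega), ih]
        have hpn1 : p (n + 1) = 0 := by
          have h1 : Tendsto (fun k => p (k + (n + 1))) atTop (nhds 0) :=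
            htend.comp (tendsto_add_atTop_nat (n + 1))
          have h2 : (fun k : ℕ => p (k + (n + 1))) = fun _ => p (n + 1) :=
            funext fun k => by rw [show k + (n + 1) = n + 1 + k by omega, htail k]
          rw [h2] at h1
          exact tendsto_nhds_unique tendsto_const_nhds h1
        have hzero : ∀ i, n + 1 ≤ i → p i = 0 := by
          intro i hi
          obtain ⟨k, rfl⟩ := Nat.exists_eq_add_of_le hi
          rw [htail k, hpn1]
        have hhead : ∀ i, i ≤ n → p i = p 0 := by
          intro i hi; induction i with
          | zero => rfl
          | succ m ih => rw [hne m (by omega), ih (by omega)]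
        have hsupp : ∀ i ∉ Finset.range (n + 1), p i = 0 := by
          intro i hi
          exact hzero i (by simpa using Finset.mem_range.not.mp hi)
        have hsum' : ((n : ℝ) + 1) * p 0 = 1 := by
          have h := tsum_eq_sum (L := SummationFilter.unconditional ℕ) hsupp
          rw [hsum] at h
          have h2 : ∑ i ∈ Finset.range (n + 1), p i = ((n : ℝ) + 1) * p 0 := by
            rw [Finset.sum_congr rfl fun i hi =>
              hhead i (Nat.lt_succ_iff.mp (Finset.mem_range.mp hi))]
            rw [Finset.sum_const, Finset.card_range, nsmul_eq_mul]
            push_cast; ring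
          rw [h2] at h; linarith
        have hsuppμ : ∀ i ∉ Finset.range (n + 1), (i : ℝ) * p i = 0 := by
          intro i hi
          rw [hzero i (by simpa using Finset.mem_range.not.mp hi), mul_zero]
        have hμval : μ * 2 = p 0 * ((n : ℝ) * ((n : ℝ) + 1)) := by
          have h := tsum_eq_sum (L := SummationFilter.unconditional ℕ) hsuppμ
          have h2 : ∑ i ∈ Finset.range (n + 1), (i : ℝ) * p i
              = p 0 * ∑ i ∈ Finset.range (n + 1), (i : ℝ) := by
            rw [Finset.mul_sum]
            refine Finset.sum_congr rfl fun i hi => ?_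
            rw [hhead i (Nat.lt_succ_iff.mp (Finset.mem_range.mp hi))]; ring
          have h3 : (∑ i ∈ Finset.range (n + 1), (i : ℝ)) * 2 = ((n : ℝ) + 1) * (n : ℝ) := by
            have h4 := Finset.sum_range_id_mul_two (n + 1)
            have h5 : ((∑ i ∈ Finset.range (n + 1), i : ℕ) : ℝ) * 2 = ((n + 1 : ℕ) : ℝ) * ((n : ℕ) : ℝ) := by
              rw [show ((n + 1 : ℕ) : ℝ) * ((n : ℕ) : ℝ) = (((n + 1) * ((n + 1) - 1) : ℕ) : ℝ) by
                push_cast [Nat.add_sub_cancel]; ring, ← h4]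
              push_cast; ring
            push_cast at h5
            linarith
          rw [hμ, h, h2]
          linear_combination p 0 * h3
        have hn0 : n = 0 := by
          have hreal : (n : ℝ) = 0 := by linear_combination (n : ℝ) * hsum' + hμval + 2 * hn
          exact_mod_cast hreal
        subst hn0
        intro i
        cases i with
        | zero =>
          rw [if_pos rfl]
          norm_num at hsum'
          linarith
        | succ m =>
          rw [if_neg (by simp)]
          exact hzero (m + 1) (by omega)
      · push_neg at hex
        exact (const_contra p hsum htend fun i => hkey i (hex i)).elim
  · intro hd
    have hp0 : p 0 = 1 := by simpa using hd 0
    have hterm : ∀ i : ℕ, (i : ℝ) * p i = 0 := by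
      intro i; cases i with
      | zero => simp
      | succ m => rw [hd (m + 1)]; simp
    have hterm2 : ∀ i : ℕ, (i : ℝ) ^ 2 * p i = 0 := by
      intro i; cases i with
      | zero => simp
      | succ m => rw [hd (m + 1)]; simp
    have hμ0 : μ = 0 := by rw [hμ, tsum_congr hterm, tsum_zero]
    have hσ0 : σ2 = 0 := by rw [hσ, tsum_congr hterm2, tsum_zero, hμ0]; ring
    rw [hμ0, hσ0, hp0]; norm_num
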